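/- Let X be a real-valued random variable on a probability space and let g : ℝ → ℝ be a continuous monotone nondecreasing function; set Y := g(X) (so X and Y are comonotone). Then for every t ∈ (0,1), F_{X+Y}⁻¹(t) = F_X⁻¹(t) + F_Y⁻¹(t); that is, quantiles are additive for comonotone random variables and the pooling effect is zero. -/

import Mathlib

open MeasureTheory ProbabilityTheory Set Filter Topology

/-- The quantile function of a distribution on `ℝ`: `F⁻¹(t) = inf {x | t ≤ F(x)}`. -/
noncomputable def quantile (μ : Measure ℝ) (t : ℝ) : ℝ :=
  sInf {x : ℝ | t ≤ cdf μ x}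

lemma quantile_comp_aux {Ω : Type*} [MeasurableSpace Ω]
    (P : Measure Ω) [IsProbabilityMeasure P] (X : Ω → ℝ) (hX : Measurable X)
    (g : ℝ → ℝ) (hgc : Continuous g) (hgm : Monotone g)
    (t : ℝ) (ht : t ∈ Set.Ioo (0 : ℝ) 1) :
    quantile (Measure.map (fun ω => g (X ω)) P) t = g (quantile (Measure.map X P) t) := by
  set μ := Measure.map X P with hμ
  set ν := Measure.map (fun ω => g (X ω)) P with hν
  haveI : IsProbabilityMeasure μ := Measure.isProbabilityMeasure_map hX.aemeasurable
  have hgX : Measurable fun ω => g (X ω) := hgc.measurable.comp hX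
  haveI : IsProbabilityMeasure ν := Measure.isProbabilityMeasure_map hgX.aemeasurable
  set S : Set ℝ := {x : ℝ | t ≤ cdf μ x} with hS
  set q : ℝ := sInf S with hq
  -- S is nonempty
  have hS_ne : S.Nonempty := by
    obtain ⟨x, hx⟩ := ((tendsto_cdf_atTop μ).eventually (eventually_ge_nhds ht.2)).exists
    exact ⟨x, hx⟩
  -- S is bounded below
  obtain ⟨x₀, hx₀⟩ := ((tendsto_cdf_atBot μ).eventually (eventually_lt_nhds ht.1)).exists
  have hbdd : BddBelow S := by
    refine ⟨x₀, fun s hs => ?_⟩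
    by_contra hlt
    push_neg at hlt
    exact absurd (le_trans hs (monotone_cdf μ hlt.le)) (not_le.2 hx₀)
  -- t ≤ cdf μ q
  have hqt : t ≤ cdf μ q := by
    have hcont : Tendsto (cdf μ) (𝓝[>] q) (𝓝 (cdf μ q)) :=
      ((cdf μ).right_continuous q).mono_left (nhdsWithin_mono q Ioi_subset_Ici_self)
    refine ge_of_tendsto hcont ?_
    filter_upwards [self_mem_nhdsWithin] with x hx
    obtain ⟨s, hsS, hsx⟩ := exists_lt_of_csInf_lt hS_ne hx
    exact le_trans hsS (monotone_cdf μ hsx.le)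
  -- cdf of ν in terms of P
  have hcdfν : ∀ y : ℝ, cdf ν y = (P ((fun ω => g (X ω)) ⁻¹' Iic y)).toReal := by
    intro y
    rw [cdf_eq_real, measureReal_def, hν, Measure.map_apply hgX measurableSet_Iic]
  have hcdfμ : ∀ y : ℝ, cdf μ y = (P (X ⁻¹' Iic y)).toReal := by
    intro y
    rw [cdf_eq_real, measureReal_def, hμ, Measure.map_apply hX measurableSet_Iic]
  -- g q is in the set for ν
  have hgq_mem : t ≤ cdf ν (g q) := by
    refine le_trans hqt ?_
    rw [hcdfν, hcdfμ]
    refine ENNReal.toReal_mono (measure_ne_top _ _) (measure_mono ?_)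
    intro ω hω
    exact hgm hω
  -- g q is a lower bound
  have hgq_lb : ∀ y ∈ {y : ℝ | t ≤ cdf ν y}, g q ≤ y := by
    intro y hy
    by_contra hlt
    push_neg at hlt
    set A : Set ℝ := g ⁻¹' Iic y with hA
    have hAq : A ⊆ Iio q := by
      intro x hx
      simp only [Set.mem_Iio]
      by_contra hxq
      push_neg at hxq
      exact absurd (le_trans (hgm hxq) hx) (not_le.2 hlt)
    rcases A.eq_empty_or_nonempty with hAe | hAne
    · have h0 : cdf ν y = 0 := by
        rw [hcdfν]
        have he : (fun ω => g (X ω)) ⁻¹' Iic y = ∅ := by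
          ext ω
          simp only [Set.mem_preimage, Set.mem_empty_iff_false, iff_false]
          intro h
          have hmem : X ω ∈ A := h
          rw [hAe] at hmem
          exact hmem
        rw [he]
        simp
      have hy' : t ≤ cdf ν y := hy
      rw [h0] at hy'
      exact absurd (lt_of_le_of_lt hy' ht.1) (lt_irrefl t)
    · have hAclosed : IsClosed A := IsClosed.preimage hgc isClosed_Iic
      have hAbdd : BddAbove A := ⟨q, fun x hx => (hAq hx).le⟩
      set s : ℝ := sSup A with hs
      have hsA : s ∈ A := hAclosed.csSup_mem hAne hAbdd
      have hsq : s < q := hAq hsA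
      have hsub : (fun ω => g (X ω)) ⁻¹' Iic y ⊆ X ⁻¹' Iic s := by
        intro ω hω
        exact le_csSup hAbdd hω
      have h1 : cdf ν y ≤ cdf μ s := by
        rw [hcdfν, hcdfμ]
        exact ENNReal.toReal_mono (measure_ne_top _ _) (measure_mono hsub)
      have h2 : cdf μ s < t := by
        by_contra h
        push_neg at h
        exact absurd (csInf_le hbdd h) (not_le.2 hsq)
      exact absurd (le_trans hy h1) (not_le.2 h2)
  -- conclude
  refine le_antisymm (csInf_le ⟨g q, hgq_lb⟩ hgq_mem) (le_csInf ⟨g q, hgq_mem⟩ hgq_lb)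

/-- Quantiles are additive for comonotone random variables: if `Y = g(X)` for a continuous
nondecreasing `g`, then the quantile of `X + Y` is the sum of the quantiles, i.e. the
pooling effect is zero. -/
theorem quantile_add_comonotone {Ω : Type*} [MeasurableSpace Ω]
    (P : Measure Ω) [IsProbabilityMeasure P] (X : Ω → ℝ) (hX : Measurable X)
    (g : ℝ → ℝ) (hgc : Continuous g) (hgm : Monotone g)
    (t : ℝ) (ht : t ∈ Set.Ioo (0 : ℝ) 1) :
    quantile (Measure.map (fun ω => X ω + g (X ω)) P) t =
      quantile (Measure.map X P) t + quantile (Measure.map (fun ω => g (X ω)) P) t := by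
  have h1 := quantile_comp_aux P X hX g hgc hgm t ht
  have h2 := quantile_comp_aux P X hX (fun x => x + g x)
    (continuous_id.add hgc) (fun a b hab => add_le_add hab (hgm hab)) t ht
  rw [h1, h2]
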